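/- arXiv:0810.3434 — 2 statements merged into one kernel-verified Lean document; each statement's English description precedes it below -/
import Mathlib

section
/- Let (v₀, v₁, v₂, v₃) be four affinely independent points of ℝ³ and for each i let μᵢ : ℝ³ → ℝ be the corresponding barycentric coordinate function, i.e., the unique affine function with μᵢ(vⱼ) = δᵢⱼ; since μᵢ is affine its gradient ∇μᵢ is a constant vector. For distinct i, j, k define the Whitney vector field of the triangular face [vᵢ, vⱼ, v_k] by F = 2(μᵢ ∇μⱼ × ∇μ_k − μⱼ ∇μᵢ × ∇μ_k + μ_k ∇μᵢ × ∇μⱼ), where × is the cross product on ℝ³. Then the flux of F through the face [vᵢ, vⱼ, v_k] equals 1: ∫∫_{s,t ≥ 0, s+t ≤ 1} ⟨F(vᵢ + s(vⱼ − vᵢ) + t(v_k − vᵢ)), (vⱼ − vᵢ) × (v_k − vᵢ)⟩ ds dt = 1. -/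
open Matrix MeasureTheory

lemma vol_std_triangle :
    (volume : Measure (ℝ × ℝ)) {q : ℝ × ℝ | 0 ≤ q.1 ∧ 0 ≤ q.2 ∧ q.1 + q.2 ≤ 1}
      = ENNReal.ofReal (1/2) := by
  have hS : MeasurableSet {q : ℝ × ℝ | 0 ≤ q.1 ∧ 0 ≤ q.2 ∧ q.1 + q.2 ≤ 1} := by
    apply MeasurableSet.inter
    · exact measurableSet_le measurable_const measurable_fst
    apply MeasurableSet.inter
    · exact measurableSet_le measurable_const measurable_snd
    · exact measurableSet_le (measurable_fst.add measurable_snd) measurable_const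
  rw [Measure.volume_eq_prod, Measure.prod_apply hS]
  have hslice : (fun x : ℝ => volume (Prod.mk x ⁻¹' {q : ℝ × ℝ | 0 ≤ q.1 ∧ 0 ≤ q.2 ∧ q.1 + q.2 ≤ 1}))
      = Set.indicator (Set.Icc (0:ℝ) 1) (fun x => ENNReal.ofReal (1 - x)) := by
    funext x
    rw [Set.indicator_apply]
    split_ifs with h
    · have : Prod.mk x ⁻¹' {q : ℝ × ℝ | 0 ≤ q.1 ∧ 0 ≤ q.2 ∧ q.1 + q.2 ≤ 1}
          = Set.Icc 0 (1 - x) := by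
        ext y; simp only [Set.mem_preimage, Set.mem_setOf_eq, Set.mem_Icc]
        constructor
        · rintro ⟨_, h2, h3⟩; exact ⟨h2, by linarith⟩
        · rintro ⟨h2, h3⟩; exact ⟨h.1, h2, by linarith⟩
      rw [this, Real.volume_Icc]; ring_nf
    · have : Prod.mk x ⁻¹' {q : ℝ × ℝ | 0 ≤ q.1 ∧ 0 ≤ q.2 ∧ q.1 + q.2 ≤ 1} = ∅ := by
        ext y; simp only [Set.mem_preimage, Set.mem_setOf_eq, Set.mem_empty_iff_false, iff_false]
        rintro ⟨h1, h2, h3⟩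
        exact h ⟨h1, by linarith⟩
      rw [this, measure_empty]
  rw [hslice]
  rw [show lintegral volume ((Set.Icc (0:ℝ) 1).indicator fun x => ENNReal.ofReal (1 - x))
      = ∫⁻ x in Set.Icc (0:ℝ) 1, ENNReal.ofReal (1 - x) from
    lintegral_indicator measurableSet_Icc _]
  rw [← ofReal_integral_eq_lintegral_ofReal]
  · congr 1
    rw [MeasureTheory.integral_Icc_eq_integral_Ioc, ← intervalIntegral.integral_of_le (by norm_num : (0:ℝ) ≤ 1)]
    have : ∫ x in (0:ℝ)..1, (1 - x) = 1/2 := by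
      rw [intervalIntegral.integral_sub intervalIntegrable_const (intervalIntegral.intervalIntegrable_id)]
      simp
      norm_num
    rw [this]
  · apply Continuous.integrableOn_Icc; continuity
  · filter_upwards [MeasureTheory.self_mem_ae_restrict measurableSet_Icc] with x hx
    simp only [Set.mem_Icc] at hx
    simp only [Pi.zero_apply]
    linarith [hx.2]

/-- Whitney interpolation on a tetrahedron reproduces the value 1 on its own face:
if `μ l` are the barycentric coordinate functions of an affinely independent quadruple
`(v₀, v₁, v₂, v₃)` in ℝ³ (affine functions with `μ l (v m) = δₗₘ` and constant gradient
`g l`), then the flux of the Whitney vector field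
`F = 2(μᵢ ∇μⱼ × ∇μₖ − μⱼ ∇μᵢ × ∇μₖ + μₖ ∇μᵢ × ∇μⱼ)` of the face `[vᵢ, vⱼ, vₖ]`
through that face equals 1. -/
theorem whitney_face_flux_own_face
    (v : Fin 4 → (Fin 3 → ℝ)) (hv : AffineIndependent ℝ v)
    (μ : Fin 4 → (Fin 3 → ℝ) → ℝ) (g : Fin 4 → (Fin 3 → ℝ))
    (haff : ∀ l x, μ l x = g l ⬝ᵥ x + μ l 0)
    (hbar : ∀ l m, μ l (v m) = if l = m then 1 else 0)
    (i j k : Fin 4) (hij : i ≠ j) (hik : i ≠ k) (hjk : j ≠ k) :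
    (∫ q in {q : ℝ × ℝ | 0 ≤ q.1 ∧ 0 ≤ q.2 ∧ q.1 + q.2 ≤ 1},
      ((2 : ℝ) • (μ i (v i + q.1 • (v j - v i) + q.2 • (v k - v i)) • (g j ⨯₃ g k)
        - μ j (v i + q.1 • (v j - v i) + q.2 • (v k - v i)) • (g i ⨯₃ g k)
        + μ k (v i + q.1 • (v j - v i) + q.2 • (v k - v i)) • (g i ⨯₃ g j)))
        ⬝ᵥ ((v j - v i) ⨯₃ (v k - v i))) = 1 := by
  have hgv : ∀ l m, g l ⬝ᵥ v m = (if l = m then 1 else 0) - μ l 0 := by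
    intro l m
    have h1 := haff l (v m)
    rw [hbar] at h1
    linarith
  -- barycentric coordinates along the parametrization
  have hmu : ∀ l (s t : ℝ), μ l (v i + s • (v j - v i) + t • (v k - v i)) =
      (if l = i then 1 else 0)
        + s * ((if l = j then 1 else 0) - (if l = i then 1 else 0))
        + t * ((if l = k then 1 else 0) - (if l = i then 1 else 0)) := by
    intro l s t
    rw [haff]
    rw [dotProduct_add, dotProduct_add, dotProduct_smul,
      dotProduct_smul, dotProduct_sub, dotProduct_sub, hgv, hgv, hgv]
    simp only [smul_eq_mul]
    ring
  -- the dot products of the constant cross products with the face normal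
  have hcross : ∀ a b : Fin 4, (g a ⨯₃ g b) ⬝ᵥ ((v j - v i) ⨯₃ (v k - v i)) =
      ((if a = j then 1 else 0) - (if a = i then 1 else 0))
        * ((if b = k then 1 else 0) - (if b = i then 1 else 0))
      - ((if a = k then 1 else 0) - (if a = i then 1 else 0))
        * ((if b = j then 1 else 0) - (if b = i then 1 else 0)) := by
    intro a b
    rw [cross_dot_cross, dotProduct_sub, dotProduct_sub,
      dotProduct_sub, dotProduct_sub, hgv, hgv, hgv, hgv, hgv, hgv]
    ring
  have hconst : ∀ q : ℝ × ℝ,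
      ((2 : ℝ) • (μ i (v i + q.1 • (v j - v i) + q.2 • (v k - v i)) • (g j ⨯₃ g k)
        - μ j (v i + q.1 • (v j - v i) + q.2 • (v k - v i)) • (g i ⨯₃ g k)
        + μ k (v i + q.1 • (v j - v i) + q.2 • (v k - v i)) • (g i ⨯₃ g j)))
        ⬝ᵥ ((v j - v i) ⨯₃ (v k - v i)) = 2 := by
    intro q
    rw [smul_dotProduct, add_dotProduct, sub_dotProduct,
      smul_dotProduct, smul_dotProduct, smul_dotProduct,
      hcross, hcross, hcross, hmu, hmu, hmu]
    simp only [if_pos rfl, if_neg hij, if_neg hik, if_neg hjk,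
      if_neg (Ne.symm hij), if_neg (Ne.symm hik), if_neg (Ne.symm hjk), smul_eq_mul]
    norm_num
    ring
  rw [setIntegral_congr_fun ?hS (fun q _ => hconst q)]
  case hS =>
    apply MeasurableSet.inter
    · exact measurableSet_le measurable_const measurable_fst
    apply MeasurableSet.inter
    · exact measurableSet_le measurable_const measurable_snd
    · exact measurableSet_le (measurable_fst.add measurable_snd) measurable_const
  rw [setIntegral_const, Measure.real, vol_std_triangle, ENNReal.toReal_ofReal (by norm_num)]
  norm_num
end

section
/- Let (v₀, v₁, v₂, v₃) be four affinely independent points of ℝ³ and for each i let μᵢ : ℝ³ → ℝ be the corresponding barycentric coordinate function, i.e., the unique affine function with μᵢ(vⱼ) = δᵢⱼ; since μᵢ is affine its gradient ∇μᵢ is a constant vector. For distinct i, j, k define the Whitney vector field of the triangular face [vᵢ, vⱼ, v_k] by F = 2(μᵢ ∇μⱼ × ∇μ_k − μⱼ ∇μᵢ × ∇μ_k + μ_k ∇μᵢ × ∇μⱼ), where × is the cross product on ℝ³. Then for any three distinct indices a, b, c ∈ {0, 1, 2, 3} with {a, b, c} ≠ {i, j, k}, the flux of F through the face [vₐ, v_b,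 v_c] vanishes: ∫∫_{s,t ≥ 0, s+t ≤ 1} ⟨F(vₐ + s(v_b − vₐ) + t(v_c − vₐ)), (v_b − vₐ) × (v_c − vₐ)⟩ ds dt = 0. (Together with the value 1 on its own face, this says Whitney interpolation reproduces the flux cochain values on the faces of a tetrahedron.) -/
open Matrix MeasureTheory

set_option maxHeartbeats 1000000

private lemma cross_dot_cross' (a b c d : Fin 3 → ℝ) :
    (a ⨯₃ b) ⬝ᵥ (c ⨯₃ d) = (a ⬝ᵥ c) * (b ⬝ᵥ d) - (a ⬝ᵥ d) * (b ⬝ᵥ c) := by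
  simp [cross_apply, dotProduct, Fin.sum_univ_three]
  ring

private lemma fin4_mem_aux : ∀ i j k a b c x : Fin 4,
    i ≠ j → i ≠ k → j ≠ k → a ≠ b → a ≠ c → b ≠ c →
    (i = a ∨ i = b ∨ i = c) → (j = a ∨ j = b ∨ j = c) → (k = a ∨ k = b ∨ k = c) →
    ((x = a ∨ x = b ∨ x = c) ↔ (x = i ∨ x = j ∨ x = k)) := by decide

/-- Whitney interpolation on a tetrahedron vanishes on the other faces:
if `μ l` are the barycentric coordinate functions of an affinely independent quadruple
`(v₀, v₁, v₂, v₃)` in ℝ³ (affine functions with `μ l (v m) = δₗₘ` and constant gradient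
`g l`), then the flux of the Whitney vector field
`F = 2(μᵢ ∇μⱼ × ∇μₖ − μⱼ ∇μᵢ × ∇μₖ + μₖ ∇μᵢ × ∇μⱼ)` of the face `[vᵢ, vⱼ, vₖ]`
through any face `[vₐ, v_b, v_c]` with `{a, b, c} ≠ {i, j, k}` equals 0. -/
theorem whitney_face_flux_other_face
    (v : Fin 4 → (Fin 3 → ℝ)) (hv : AffineIndependent ℝ v)
    (μ : Fin 4 → (Fin 3 → ℝ) → ℝ) (g : Fin 4 → (Fin 3 → ℝ))
    (haff : ∀ l x, μ l x = g l ⬝ᵥ x + μ l 0)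
    (hbar : ∀ l m, μ l (v m) = if l = m then 1 else 0)
    (i j k : Fin 4) (hij : i ≠ j) (hik : i ≠ k) (hjk : j ≠ k)
    (a b c : Fin 4) (hab : a ≠ b) (hac : a ≠ c) (hbc : b ≠ c)
    (hne : ({a, b, c} : Set (Fin 4)) ≠ {i, j, k}) :
    (∫ q in {q : ℝ × ℝ | 0 ≤ q.1 ∧ 0 ≤ q.2 ∧ q.1 + q.2 ≤ 1},
      ((2 : ℝ) • (μ i (v a + q.1 • (v b - v a) + q.2 • (v c - v a)) • (g j ⨯₃ g k)
        - μ j (v a + q.1 • (v b - v a) + q.2 • (v c - v a)) • (g i ⨯₃ g k)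
        + μ k (v a + q.1 • (v b - v a) + q.2 • (v c - v a)) • (g i ⨯₃ g j)))
        ⬝ᵥ ((v b - v a) ⨯₃ (v c - v a))) = 0 := by
  -- gradients pair with edge vectors via barycentric values
  have hgd : ∀ l m m', g l ⬝ᵥ (v m - v m') = μ l (v m) - μ l (v m') := by
    intro l m m'
    rw [haff l (v m), haff l (v m'), dotProduct_sub]
    ring
  -- barycentric coordinates along the face are affine in (q.1, q.2)
  have hμ : ∀ l (q : ℝ × ℝ), μ l (v a + q.1 • (v b - v a) + q.2 • (v c - v a)) =
      μ l (v a) + q.1 * (μ l (v b) - μ l (v a)) + q.2 * (μ l (v c) - μ l (v a)) := by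
    intro l q
    rw [haff l (v a + q.1 • (v b - v a) + q.2 • (v c - v a)), haff l (v a), haff l (v b),
      haff l (v c)]
    simp only [dotProduct_add, dotProduct_smul, dotProduct_sub, smul_eq_mul]
    ring
  -- some vertex of {i,j,k} misses {a,b,c}
  have hd : (i ≠ a ∧ i ≠ b ∧ i ≠ c) ∨ (j ≠ a ∧ j ≠ b ∧ j ≠ c) ∨ (k ≠ a ∧ k ≠ b ∧ k ≠ c) := by
    by_contra h
    push_neg at h
    obtain ⟨h1, h2, h3⟩ := h
    have mem : ∀ x : Fin 4, (x ≠ a → x ≠ b → x = c) → x = a ∨ x = b ∨ x = c := by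
      intro x hx
      by_cases ha : x = a
      · exact Or.inl ha
      · by_cases hb : x = b
        · exact Or.inr (Or.inl hb)
        · exact Or.inr (Or.inr (hx ha hb))
    have hi := mem i h1
    have hj := mem j h2
    have hk := mem k h3
    apply hne
    ext x
    simp only [Set.mem_insert_iff, Set.mem_singleton_iff]
    exact fin4_mem_aux i j k a b c x hij hik hjk hab hac hbc hi hj hk
  -- in all cases the integrand is pointwise zero
  have hz : ∀ q : ℝ × ℝ,
      ((2 : ℝ) • (μ i (v a + q.1 • (v b - v a) + q.2 • (v c - v a)) • (g j ⨯₃ g k)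
        - μ j (v a + q.1 • (v b - v a) + q.2 • (v c - v a)) • (g i ⨯₃ g k)
        + μ k (v a + q.1 • (v b - v a) + q.2 • (v c - v a)) • (g i ⨯₃ g j)))
        ⬝ᵥ ((v b - v a) ⨯₃ (v c - v a)) = 0 := by
    intro q
    rcases hd with ⟨h1, h2, h3⟩ | ⟨h1, h2, h3⟩ | ⟨h1, h2, h3⟩
    · have hu : g i ⬝ᵥ (v b - v a) = 0 := by rw [hgd, hbar, hbar]; simp [h1, h2]
      have hw : g i ⬝ᵥ (v c - v a) = 0 := by rw [hgd, hbar, hbar]; simp [h1, h3]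
      have hμ0 : μ i (v a + q.1 • (v b - v a) + q.2 • (v c - v a)) = 0 := by
        rw [hμ, hbar, hbar, hbar]; simp [h1, h2, h3]
      have e2 : (g i ⨯₃ g k) ⬝ᵥ ((v b - v a) ⨯₃ (v c - v a)) = 0 := by
        rw [cross_dot_cross', hu, hw]; ring
      have e3 : (g i ⨯₃ g j) ⬝ᵥ ((v b - v a) ⨯₃ (v c - v a)) = 0 := by
        rw [cross_dot_cross', hu, hw]; ring
      simp only [smul_dotProduct, add_dotProduct, sub_dotProduct, e2, e3, hμ0,
        smul_eq_mul, mul_zero, zero_mul, sub_zero, zero_sub, add_zero, zero_add, neg_zero]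
    · have hu : g j ⬝ᵥ (v b - v a) = 0 := by rw [hgd, hbar, hbar]; simp [h1, h2]
      have hw : g j ⬝ᵥ (v c - v a) = 0 := by rw [hgd, hbar, hbar]; simp [h1, h3]
      have hμ0 : μ j (v a + q.1 • (v b - v a) + q.2 • (v c - v a)) = 0 := by
        rw [hμ, hbar, hbar, hbar]; simp [h1, h2, h3]
      have e1 : (g j ⨯₃ g k) ⬝ᵥ ((v b - v a) ⨯₃ (v c - v a)) = 0 := by
        rw [cross_dot_cross', hu, hw]; ring
      have e3 : (g i ⨯₃ g j) ⬝ᵥ ((v b - v a) ⨯₃ (v c - v a)) = 0 := by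
        rw [cross_dot_cross', hu, hw]; ring
      simp only [smul_dotProduct, add_dotProduct, sub_dotProduct, e1, e3, hμ0,
        smul_eq_mul, mul_zero, zero_mul, sub_zero, zero_sub, add_zero, zero_add, neg_zero,
        sub_self]
    · have hu : g k ⬝ᵥ (v b - v a) = 0 := by rw [hgd, hbar, hbar]; simp [h1, h2]
      have hw : g k ⬝ᵥ (v c - v a) = 0 := by rw [hgd, hbar, hbar]; simp [h1, h3]
      have hμ0 : μ k (v a + q.1 • (v b - v a) + q.2 • (v c - v a)) = 0 := by
        rw [hμ, hbar, hbar, hbar]; simp [h1, h2, h3]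
      have e1 : (g j ⨯₃ g k) ⬝ᵥ ((v b - v a) ⨯₃ (v c - v a)) = 0 := by
        rw [cross_dot_cross', hu, hw]; ring
      have e2 : (g i ⨯₃ g k) ⬝ᵥ ((v b - v a) ⨯₃ (v c - v a)) = 0 := by
        rw [cross_dot_cross', hu, hw]; ring
      simp only [smul_dotProduct, add_dotProduct, sub_dotProduct, e1, e2, hμ0,
        smul_eq_mul, mul_zero, zero_mul, sub_zero, zero_sub, add_zero, zero_add, neg_zero,
        sub_self]
  simp only [hz, integral_zero]
end
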